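/- For λ > 1 let s*(λ) denote the unique zero of s ↦ F(s,λ) in the interval (0, √λ − 1). Then the function λ ↦ s*(λ) is strictly increasing on (1, ∞), lim_{λ→1⁺} s*(λ) = 0, and lim_{λ→∞} s*(λ) = 1. -/

import Mathlib

open Filter Topology

/-- `θ'(s) = ((1+s²−λ) + √((1+s²−λ)² − 4s²))/2`. -/
noncomputable def theta' (s lam : ℝ) : ℝ :=
  ((1 + s ^ 2 - lam) + Real.sqrt ((1 + s ^ 2 - lam) ^ 2 - 4 * s ^ 2)) / 2

/-- `δ(s) = s²λ/(λ−1)`. -/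
noncomputable def adelta (s lam : ℝ) : ℝ := s ^ 2 * lam / (lam - 1)

/-- `F(s,λ) = θ'(s) − δ(s) + s`. -/
noncomputable def Ffun (s lam : ℝ) : ℝ := theta' s lam - adelta s lam + s

/-- the reduced cubic -/
noncomputable def Gfun (s k : ℝ) : ℝ :=
  1 - (3*k+1)*s + (2*k^2+k)*s^2 - (k^3+k^2)*s^3

lemma key (lam s : ℝ) (hlam : 1 < lam) (hs0 : 0 < s) (hs1 : s < Real.sqrt lam - 1)
    (hF : Ffun s lam = 0) :
    Gfun s (1/(lam-1)) = 0 ∧ s * lam < lam - 1 ∧ (1/(lam-1)) * (s^2 + 2*s) < 1 := by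
  have hl0 : (0:ℝ) < lam - 1 := by linarith
  have hl0' : lam - 1 ≠ 0 := ne_of_gt hl0
  have hsq : (s+1)^2 < lam := by
    have h1 : s + 1 < Real.sqrt lam := by linarith
    have h2 : (s+1)^2 < (Real.sqrt lam)^2 := by
      nlinarith [Real.sqrt_nonneg lam]
    rwa [Real.sq_sqrt (by positivity : (0:ℝ) ≤ lam)] at h2
  have ha : 2*s < lam - 1 - s^2 := by nlinarith
  have hD0 : 0 ≤ (1 + s^2 - lam)^2 - 4*s^2 := by nlinarith
  set r : ℝ := Real.sqrt ((1 + s^2 - lam)^2 - 4*s^2) with hrdef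
  have hr0 : 0 ≤ r := Real.sqrt_nonneg _
  have hr2 : r^2 = (1 + s^2 - lam)^2 - 4*s^2 := Real.sq_sqrt hD0
  have hra : r < lam - 1 - s^2 := by nlinarith
  have he2 : (lam-1)*r = (lam-1)*(lam-1-s^2) + 2*s^2*lam - 2*s*(lam-1) := by
    have h := hF
    unfold Ffun theta' adelta at h
    rw [← hrdef] at h
    field_simp at h
    linear_combination h
  have hds : s * lam < lam - 1 := by nlinarith
  have hc : (1/(lam-1)) * (s^2 + 2*s) < 1 := by
    rw [div_mul_eq_mul_div, one_mul, div_lt_one hl0]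
    nlinarith
  refine ⟨?_, hds, hc⟩
  have h3 : (lam-1)^2 * ((1+s^2-lam)^2 - 4*s^2)
      = ((lam-1)*(lam-1-s^2) + 2*s^2*lam - 2*s*(lam-1))^2 := by
    rw [← he2]; rw [mul_pow, hr2]
  have hP4 : 4*s*((lam-1)^3 - (lam+2)*(lam-1)^2*s + (lam^2-1)*s^2 - lam*s^3) = 0 := by
    linear_combination h3
  have hP : (lam-1)^3 - (lam+2)*(lam-1)^2*s + (lam^2-1)*s^2 - lam*s^3 = 0 := by
    have h4s : (4*s : ℝ) ≠ 0 := by positivity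
    exact (mul_eq_zero.mp hP4).resolve_left h4s
  unfold Gfun
  field_simp
  linear_combination hP

lemma Gmono_k (s k1 k2 : ℝ) (hs0 : 0 < s) (hs1 : s < 1) (hk2 : 0 < k2) (hk : k2 < k1) :
    Gfun s k1 < Gfun s k2 := by
  have hB : 0 < 3 - s - 2*s*(k1+k2) + s^2*(k1+k2) + s^2*(k1^2+k1*k2+k2^2) := by
    nlinarith [sq_nonneg (3*s*(k1+k2) + 2*(s-2)), sq_nonneg (k1-k2), sq_nonneg s,
      mul_pos hs0 hs0]
  have := mul_pos (mul_pos (sub_pos.2 hk) hs0) hB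
  unfold Gfun
  nlinarith [this]

lemma Gmono_s (k s1 s2 : ℝ) (hk : 0 < k) (h1 : 0 < s1) (h12 : s1 < s2)
    (hc1 : k*(s1^2+2*s1) < 1) (hc2 : k*(s2^2+2*s2) < 1) :
    Gfun s2 k < Gfun s1 k := by
  have h2 : 0 < s2 := h1.trans h12
  have e1 : 0 < (2*k+1)*(1 - k*(s1^2+2*s1)) := by nlinarith
  have e2 : 0 < (2*k+1)*(1 - k*(s2^2+2*s2)) := by nlinarith
  have hC : 0 < (3*k+1) - (2*k^2+k)*(s1+s2) + (k^3+k^2)*(s1^2+s1*s2+s2^2) := by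
    nlinarith [e1, e2, mul_pos hk (mul_pos h1 h1), mul_pos hk (mul_pos h2 h2),
      mul_pos (mul_pos hk hk) (mul_pos h1 h2),
      mul_pos (mul_pos (mul_pos hk hk) hk) (mul_pos h1 h2),
      mul_pos (mul_pos (mul_pos hk hk) hk) (mul_pos h1 h1),
      mul_pos (mul_pos (mul_pos hk hk) hk) (mul_pos h2 h2),
      mul_pos (mul_pos hk hk) (mul_pos h1 h1), mul_pos (mul_pos hk hk) (mul_pos h2 h2)]
  have := mul_pos (sub_pos.2 h12) hC
  unfold Gfun
  nlinarith [this]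

/-- for `λ > 1` let `s*(λ)` denote the unique zero of `s ↦ F(s,λ)` in
`(0, √λ − 1)` (given here as a function `sstar` selecting such a zero for every `λ > 1`).
Then `λ ↦ s*(λ)` is strictly increasing on `(1, ∞)`, `s*(λ) → 0` as `λ → 1⁺`, and
`s*(λ) → 1` as `λ → ∞`. -/
theorem stmt18 (sstar : ℝ → ℝ)
    (hmem : ∀ lam : ℝ, 1 < lam → sstar lam ∈ Set.Ioo 0 (Real.sqrt lam - 1))
    (hzero : ∀ lam : ℝ, 1 < lam → Ffun (sstar lam) lam = 0) :
    StrictMonoOn sstar (Set.Ioi 1) ∧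
    Filter.Tendsto sstar (nhdsWithin 1 (Set.Ioi 1)) (nhds 0) ∧
    Filter.Tendsto sstar Filter.atTop (nhds 1) := by

  -- package info from `key`
  have hkey : ∀ lam : ℝ, 1 < lam → Gfun (sstar lam) (1/(lam-1)) = 0 ∧
      sstar lam * lam < lam - 1 ∧ (1/(lam-1)) * ((sstar lam)^2 + 2*(sstar lam)) < 1 := by
    intro lam hl
    obtain ⟨h0, h1⟩ := hmem lam hl
    exact key lam (sstar lam) hl h0 h1 (hzero lam hl)
  have hs1 : ∀ lam : ℝ, 1 < lam → sstar lam < 1 := by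
    intro lam hl
    have h := (hkey lam hl).2.1
    nlinarith [(hmem lam hl).1]
  refine ⟨?_, ?_, ?_⟩
  · -- strict monotonicity
    intro l1 hl1 l2 hl2 hlt
    simp only [Set.mem_Ioi] at hl1 hl2
    have hs10 : 0 < (sstar l1) := (hmem l1 hl1).1
    have hs20 : 0 < (sstar l2) := (hmem l2 hl2).1
    have hk2pos : 0 < 1/(l2-1) := by apply div_pos one_pos; linarith
    have hk21 : 1/(l2-1) < 1/(l1-1) := by
      apply one_div_lt_one_div_of_lt <;> linarith
    obtain ⟨hG1, -, hc1⟩ := hkey l1 hl1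
    obtain ⟨hG2, -, hc2⟩ := hkey l2 hl2
    -- G(s1, k2) > 0
    have hpos : 0 < Gfun (sstar l1) (1/(l2-1)) := by
      have := Gmono_k (sstar l1) (1/(l1-1)) (1/(l2-1)) hs10 (hs1 l1 hl1) hk2pos hk21
      rw [hG1] at this; exact this
    have hc1' : (1/(l2-1)) * ((sstar l1)^2 + 2*(sstar l1)) < 1 := by
      have hpos2 : 0 < (sstar l1)^2 + 2*(sstar l1) := by positivity
      nlinarith [mul_lt_mul_of_pos_right hk21 hpos2]
    by_contra hcon
    push_neg at hcon
    rcases eq_or_lt_of_le hcon with heq | hlt2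
    · rw [show sstar l2 = sstar l1 from heq] at hG2; rw [hG2] at hpos; exact lt_irrefl 0 hpos
    · have := Gmono_s (1/(l2-1)) (sstar l2) (sstar l1) hk2pos hs20 hlt2 hc2 hc1'
      rw [hG2] at this; linarith
  · -- limit at 1⁺
    have hup : Tendsto (fun lam : ℝ => Real.sqrt lam - 1) (nhdsWithin 1 (Set.Ioi 1)) (nhds 0) := by
      have : Tendsto (fun lam : ℝ => Real.sqrt lam - 1) (nhds 1) (nhds (Real.sqrt 1 - 1)) :=
        (Real.continuous_sqrt.sub continuous_const).continuousAt
      rw [Real.sqrt_one, sub_self] at this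
      exact this.mono_left nhdsWithin_le_nhds
    refine tendsto_of_tendsto_of_tendsto_of_le_of_le' tendsto_const_nhds hup ?_ ?_
    · filter_upwards [self_mem_nhdsWithin] with lam hl
      exact le_of_lt (hmem lam hl).1
    · filter_upwards [self_mem_nhdsWithin] with lam hl
      exact le_of_lt (hmem lam hl).2
  · -- limit at ∞
    have hlow : Tendsto (fun lam : ℝ => 1 - 5/(lam-1)) atTop (nhds 1) := by
      have h5 : Tendsto (fun lam : ℝ => 5/(lam-1)) atTop (nhds 0) := by
        apply Tendsto.div_atTop tendsto_const_nhds
        exact tendsto_atTop_add_const_right _ (-1) tendsto_id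
      have := ((tendsto_const_nhds : Filter.Tendsto (fun _ : ℝ => (1:ℝ)) atTop (nhds 1)).sub h5)
      simpa using this
    refine tendsto_of_tendsto_of_tendsto_of_le_of_le' hlow tendsto_const_nhds ?_ ?_
    · filter_upwards [eventually_ge_atTop (2:ℝ)] with lam hl
      have hl1 : (1:ℝ) < lam := by linarith
      have hG := (hkey lam hl1).1
      have hs0 : 0 < sstar lam := (hmem lam hl1).1
      have hsl1 : sstar lam < 1 := hs1 lam hl1
      set k := 1/(lam-1) with hkdef
      have hk0 : 0 < k := by rw [hkdef]; apply div_pos one_pos; linarith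
      have hk1 : k ≤ 1 := by
        rw [hkdef]; rw [div_le_one (by linarith)]; linarith
      have hbound : 1 - sstar lam ≤ 5 * k := by
        unfold Gfun at hG
        nlinarith [mul_pos hk0 hs0, sq_nonneg (sstar lam), mul_pos (mul_pos hk0 hk0) hs0,
          mul_pos hk0 (mul_pos hs0 hs0), sq_nonneg k,
          mul_nonneg (mul_nonneg hk0.le hk0.le) (sq_nonneg (sstar lam))]
      rw [hkdef, mul_one_div] at hbound
      linarith
    · filter_upwards [eventually_gt_atTop (1:ℝ)] with lam hl
      exact le_of_lt (hs1 lam hl)
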